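/- arXiv:2511.17050 — 2 statements merged into one kernel-verified Lean document; each statement's English description precedes it below -/
import Mathlib

section
/- Let d ≥ 4 be an integer and let L, μ > 0. Set σ = Lμ/π and σ' = Lμ/(π√(d−2)), and suppose σ' ≥ 1. Let A₁ = (d−3)/4 if d ≥ 5 and A₁ = 2/3 if d = 4. Then Σ_{l=0}^{⌊σ⌋} (1 − (l/σ)²)^{(d−1)/2} ≥ ∫_0^σ (1 − (x/σ)²)^{(d−1)/2} dx + ((d−1)/4)·((⌊σ'⌋−1)/σ)²·(1 − A₁·((⌊σ'⌋−1)/σ)²). -/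
open intervalIntegral in
private lemma stmt17_I2 (a : ℝ) : ∫ x in a..(a+1), (x^2 - a^2) = a + 1/3 := by
  rw [intervalIntegral.integral_sub ((continuous_pow 2).intervalIntegrable _ _)
    (intervalIntegrable_const)]
  simp [integral_pow, intervalIntegral.integral_const]
  ring

open intervalIntegral in
private lemma stmt17_I4 (a : ℝ) :
    ∫ x in a..(a+1), (x^4 - a^2*x^2) = a^3 + 5/3*a^2 + a + 1/5 := by
  rw [intervalIntegral.integral_sub (f := fun x => x^4) (g := fun x => a^2*x^2) ((continuous_pow 4).intervalIntegrable _ _)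
    ((continuous_const.mul (continuous_pow 2) : Continuous fun x : ℝ => a^2 * x^2).intervalIntegrable _ _),
    intervalIntegral.integral_const_mul]
  simp [integral_pow]
  ring

private lemma stmt17_Gint (a c1 c2 : ℝ) :
    ∫ x in a..(a+1), (c1*(x^2 - a^2) - c2*(x^4 - a^2*x^2))
      = c1*(a + 1/3) - c2*(a^3 + 5/3*a^2 + a + 1/5) := by
  rw [intervalIntegral.integral_sub, intervalIntegral.integral_const_mul,
    intervalIntegral.integral_const_mul, stmt17_I2, stmt17_I4]
  · exact (continuous_const.mul ((continuous_pow 2).sub continuous_const)).intervalIntegrable _ _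
  · exact (continuous_const.mul ((continuous_pow 4).sub
      (continuous_const.mul (continuous_pow 2)))).intervalIntegrable _ _

/-- Tangent line inequality for rpow: for `0 ≤ a ≤ b` and `1 < q`,
`a^q + q a^(q-1) (b-a) ≤ b^q`. -/
private lemma stmt17_rpow_tangent {a b q : ℝ} (ha : 0 ≤ a) (hab : a ≤ b) (hq : 1 < q) :
    a ^ q + q * a ^ (q-1) * (b - a) ≤ b ^ q := by
  rcases eq_or_lt_of_le ha with h0 | h0
  · rw [← h0, Real.zero_rpow (by linarith : q ≠ 0),
      Real.zero_rpow (by intro h; apply absurd h; intro h'; nlinarith [h'] : q - 1 ≠ 0)]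
    simpa using Real.rpow_nonneg (le_trans ha hab) q
  · have hs : (-1 : ℝ) ≤ (b - a)/a := by
      have : 0 ≤ (b-a)/a := div_nonneg (by linarith) h0.le
      linarith
    have hber := one_add_mul_self_le_rpow_one_add hs hq.le
    have h1 : (1 + (b-a)/a) = b / a := by field_simp; ring
    rw [h1] at hber
    have hbq : (b/a) ^ q = b ^ q / a ^ q := Real.div_rpow (le_trans ha hab) ha q
    rw [hbq] at hber
    have haq : (0:ℝ) < a ^ q := Real.rpow_pos_of_pos h0 q
    have := mul_le_mul_of_nonneg_left hber haq.le
    rw [mul_div_cancel₀ _ (ne_of_gt haq)] at this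
    calc a ^ q + q * a ^ (q-1) * (b - a)
        = a ^ q * (1 + q * ((b-a)/a)) := by
          rw [Real.rpow_sub_one (ne_of_gt h0)]
          field_simp
      _ ≤ b ^ q := this

private lemma stmt17_sqrt_bound {v : ℝ} (h0 : 0 ≤ v) (h1 : v ≤ 3/4) :
    1 - (2/3) * v ≤ (1 - v) ^ ((1:ℝ)/2) := by
  rw [← Real.sqrt_eq_rpow]
  rw [Real.le_sqrt (by linarith) (by linarith)]
  nlinarith

private lemma stmt17_sum_poly (m : ℕ) (c0 c1 c2 c3 : ℝ) :
    ∑ l ∈ Finset.range m, (c0 + c1*(l:ℝ) + c2*(l:ℝ)^2 + c3*(l:ℝ)^3)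
      = c0*m + c1*((m:ℝ)*((m:ℝ)-1)/2) + c2*((m:ℝ)*((m:ℝ)-1)*(2*(m:ℝ)-1)/6)
        + c3*((m:ℝ)*((m:ℝ)-1)/2)^2 := by
  induction m with
  | zero => simp
  | succ n ih =>
    rw [Finset.sum_range_succ, ih]
    push_cast
    ring

set_option maxHeartbeats 1000000 in
/-- For integer `d ≥ 4`, `L, μ > 0`, `σ = Lμ/π`, `σ' = Lμ/(π√(d−2))` with `σ' ≥ 1`, and
`A₁ = (d−3)/4` if `d ≥ 5`, `A₁ = 2/3` if `d = 4`:
`Σ_{l=0}^{⌊σ⌋} (1−(l/σ)²)^{(d−1)/2} ≥ ∫_0^σ (1−(x/σ)²)^{(d−1)/2} dx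
  + ((d−1)/4)((⌊σ'⌋−1)/σ)²(1 − A₁((⌊σ'⌋−1)/σ)²)`. -/
theorem stmt17 (d : ℕ) (hd : 4 ≤ d) (L μ : ℝ) (hL : 0 < L) (hμ : 0 < μ)
    (σ σ' A₁ : ℝ)
    (hσ : σ = L * μ / Real.pi)
    (hσ' : σ' = L * μ / (Real.pi * Real.sqrt ((d : ℝ) - 2)))
    (hσ'1 : 1 ≤ σ')
    (hA₁ : A₁ = if 5 ≤ d then ((d : ℝ) - 3) / 4 else 2 / 3) :
    ∑ l ∈ Finset.range (⌊σ⌋₊ + 1), (1 - ((l : ℝ) / σ) ^ 2) ^ (((d : ℝ) - 1) / 2) ≥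
      (∫ x in (0 : ℝ)..σ, (1 - (x / σ) ^ 2) ^ (((d : ℝ) - 1) / 2))
      + ((d : ℝ) - 1) / 4 * (((⌊σ'⌋₊ : ℝ) - 1) / σ) ^ 2
          * (1 - A₁ * (((⌊σ'⌋₊ : ℝ) - 1) / σ) ^ 2) := by

  -- basic positivity facts
  have hπ := Real.pi_pos
  have hd4 : (4:ℝ) ≤ (d:ℝ) := by exact_mod_cast hd
  have hd2 : (2:ℝ) ≤ (d:ℝ) - 2 := by linarith
  have hsd1 : 1 ≤ Real.sqrt ((d:ℝ) - 2) := by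
    rw [show (1:ℝ) = Real.sqrt 1 by simp]
    exact Real.sqrt_le_sqrt (by linarith)
  have hsdpos : 0 < Real.sqrt ((d:ℝ) - 2) := by linarith
  have hσ'pos : 0 < σ' := lt_of_lt_of_le one_pos hσ'1
  have hrel : σ = σ' * Real.sqrt ((d:ℝ) - 2) := by
    rw [hσ, hσ']
    field_simp
  have hσpos : 0 < σ := by
    rw [hrel]; positivity
  have hσ'σ : σ' ≤ σ := by
    rw [hrel]
    calc σ' = σ' * 1 := (mul_one σ').symm
      _ ≤ σ' * Real.sqrt ((d:ℝ) - 2) := mul_le_mul_of_nonneg_left hsd1 hσ'pos.le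
  have hσsq : σ^2 = σ'^2 * ((d:ℝ) - 2) := by
    rw [hrel, mul_pow, Real.sq_sqrt (by linarith : (0:ℝ) ≤ (d:ℝ) - 2)]
  set p : ℝ := ((d:ℝ) - 1)/2 with hp_def
  have hp32 : (3:ℝ)/2 ≤ p := by rw [hp_def]; linarith
  have hp1 : (1:ℝ) < p := by linarith
  have hp0 : (0:ℝ) < p := by linarith
  set m : ℕ := ⌊σ'⌋₊ with hm_def
  set N : ℕ := ⌊σ⌋₊ with hN_def
  set M : ℝ := (m:ℝ) with hM_def
  have hm1 : 1 ≤ m := Nat.le_floor (by exact_mod_cast hσ'1)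
  have hM1 : (1:ℝ) ≤ M := by rw [hM_def]; exact_mod_cast hm1
  have hmσ' : M ≤ σ' := Nat.floor_le hσ'pos.le
  have hmN : m ≤ N := Nat.le_floor (le_trans hmσ' hσ'σ)
  have hNσ : (N:ℝ) ≤ σ := Nat.floor_le hσpos.le
  have hσN1 : σ ≤ (N:ℝ) + 1 := (Nat.lt_floor_add_one σ).le
  have hMσ : M ≤ σ := le_trans hmσ' hσ'σ
  -- the function
  set F : ℝ → ℝ := fun x => (1 - (x/σ)^2) ^ p with hF_def
  have hFc : Continuous F := by
    exact (Real.continuous_rpow_const hp0.le).comp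
      (continuous_const.sub ((continuous_id.div_const σ).pow 2))
  have hFI : ∀ a b : ℝ, IntervalIntegrable F MeasureTheory.volume a b :=
    fun a b => hFc.intervalIntegrable a b
  -- exponent α
  set α : ℝ := if 5 ≤ d then ((d:ℝ) - 3)/2 else 2/3 with hα_def
  have hα0 : 0 ≤ α := by
    rw [hα_def]; split <;> [skip; norm_num]
    have : (5:ℝ) ≤ (d:ℝ) := by exact_mod_cast ‹5 ≤ d›
    linarith
  -- Bernoulli-type bound on the exponent p - 1
  have hαbound : ∀ v : ℝ, 0 ≤ v → v ≤ 1/((d:ℝ) - 2) → 1 - α * v ≤ (1 - v) ^ (p - 1) := by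
    intro v hv0 hv1
    have hv12 : v ≤ 1/2 := le_trans hv1 (by rw [div_le_div_iff₀ (by linarith) (by norm_num)]; linarith)
    by_cases h5 : 5 ≤ d
    · have hd5 : (5:ℝ) ≤ (d:ℝ) := by exact_mod_cast h5
      have hα_eq : α = ((d:ℝ) - 3)/2 := by rw [hα_def, if_pos h5]
      have hq1 : 1 ≤ p - 1 := by rw [hp_def]; linarith
      have := one_add_mul_self_le_rpow_one_add (s := -v) (by linarith) hq1
      rw [hα_eq]
      calc 1 - ((d:ℝ) - 3)/2 * v = 1 + (p - 1) * (-v) := by rw [hp_def]; ring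
        _ ≤ (1 + -v) ^ (p - 1) := this
        _ = (1 - v) ^ (p - 1) := by rw [show 1 + -v = 1 - v from by ring]
    · have hd_eq : d = 4 := by omega
      have hα_eq : α = 2/3 := by rw [hα_def, if_neg h5]
      have hpm : p - 1 = (1:ℝ)/2 := by rw [hp_def, hd_eq]; norm_num
      rw [hα_eq, hpm]
      exact stmt17_sqrt_bound hv0 (by linarith)
  -- bound on (x/σ)^2 for x ≤ M
  have hvmax : ∀ x : ℝ, 0 ≤ x → x ≤ M → (x/σ)^2 ≤ 1/((d:ℝ) - 2) := by
    intro x hx0 hxM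
    rw [div_pow, div_le_div_iff₀ (by positivity) (by linarith)]
    have hx2 : x^2 ≤ σ'^2 := pow_le_pow_left₀ hx0 (le_trans hxM hmσ') 2
    have h3 : x^2 * ((d:ℝ)-2) ≤ σ'^2 * ((d:ℝ)-2) :=
      mul_le_mul_of_nonneg_right hx2 (by linarith)
    rw [one_mul, hσsq]
    exact h3
  -- pointwise tangent bound
  have hpoint : ∀ l : ℕ, (l:ℝ) + 1 ≤ M → ∀ x ∈ Set.Icc (l:ℝ) ((l:ℝ)+1),
      F x ≤ F l - ((p/σ^2)*(x^2 - (l:ℝ)^2) - (p*α/σ^4)*(x^4 - (l:ℝ)^2*x^2)) := by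
    intro l hl x hx
    obtain ⟨hx1, hx2⟩ := hx
    have hl0 : (0:ℝ) ≤ (l:ℝ) := Nat.cast_nonneg l
    have hx0 : (0:ℝ) ≤ x := le_trans hl0 hx1
    have hxM : x ≤ M := by linarith
    set u : ℝ := ((l:ℝ)/σ)^2 with hu_def
    set v : ℝ := (x/σ)^2 with hv_def
    have huv : u ≤ v := by
      rw [hu_def, hv_def]
      exact pow_le_pow_left₀ (div_nonneg hl0 hσpos.le)
        ((div_le_div_iff_of_pos_right hσpos).mpr hx1) 2
    have hv0 : 0 ≤ v := by positivity
    have hu0 : 0 ≤ u := by positivity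
    have hvle : v ≤ 1/((d:ℝ) - 2) := hvmax x hx0 hxM
    have hv12 : v ≤ 1/2 := le_trans hvle
      (by rw [div_le_div_iff₀ (by linarith) (by norm_num)]; linarith)
    have htan := stmt17_rpow_tangent (a := 1 - v) (b := 1 - u) (q := p)
      (by linarith) (by linarith) hp1
    -- htan : (1-v)^p + p*(1-v)^(p-1)*((1-u)-(1-v)) ≤ (1-u)^p
    have hber := hαbound v hv0 hvle
    have hmul : p * (1 - α*v) * (v - u) ≤ p * ((1-v)^(p-1)) * (v - u) := by
      have h1 : 0 ≤ p * (v - u) := mul_nonneg hp0.le (by linarith)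
      have h2 : (1 - α*v) * (p*(v-u)) ≤ ((1-v)^(p-1)) * (p*(v-u)) :=
        mul_le_mul_of_nonneg_right hber h1
      linarith
    have hFl : F l = (1 - u)^p := by rw [hF_def, hu_def]
    have hFx : F x = (1 - v)^p := by rw [hF_def, hv_def]
    have halg : (p/σ^2)*(x^2 - (l:ℝ)^2) - (p*α/σ^4)*(x^4 - (l:ℝ)^2*x^2)
        = p * (1 - α*v) * (v - u) := by
      rw [hu_def, hv_def]
      field_simp
    rw [hFl, hFx, halg]
    have h2 : ((1 - u) - (1 - v)) = v - u := by ring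
    rw [h2] at htan
    linarith
  -- integral lower bound on each interval [l, l+1], l+1 ≤ M
  have key2 : ∀ l : ℕ, (l:ℝ) + 1 ≤ M →
      (p/σ^2)*((l:ℝ) + 1/3) - (p*α/σ^4)*((l:ℝ)^3 + 5/3*(l:ℝ)^2 + (l:ℝ) + 1/5)
        ≤ F l - ∫ x in (l:ℝ)..((l:ℝ)+1), F x := by
    intro l hl
    have hcont : Continuous fun x : ℝ =>
        F l - ((p/σ^2)*(x^2 - (l:ℝ)^2) - (p*α/σ^4)*(x^4 - (l:ℝ)^2*x^2)) :=
      continuous_const.sub ((continuous_const.mul ((continuous_pow 2).sub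
        continuous_const)).sub (continuous_const.mul ((continuous_pow 4).sub
        (continuous_const.mul (continuous_pow 2)))))
    have h1 : (∫ x in (l:ℝ)..((l:ℝ)+1), F x)
        ≤ ∫ x in (l:ℝ)..((l:ℝ)+1),
            (F l - ((p/σ^2)*(x^2 - (l:ℝ)^2) - (p*α/σ^4)*(x^4 - (l:ℝ)^2*x^2))) :=
      intervalIntegral.integral_mono_on (by linarith) (hFI _ _)
        (hcont.intervalIntegrable _ _) (hpoint l hl)
    have h2 : (∫ x in (l:ℝ)..((l:ℝ)+1),
        (F l - ((p/σ^2)*(x^2 - (l:ℝ)^2) - (p*α/σ^4)*(x^4 - (l:ℝ)^2*x^2))))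
        = F l - ((p/σ^2)*((l:ℝ) + 1/3)
            - (p*α/σ^4)*((l:ℝ)^3 + 5/3*(l:ℝ)^2 + (l:ℝ) + 1/5)) := by
      rw [intervalIntegral.integral_sub (g := fun x => (p/σ^2)*(x^2 - (l:ℝ)^2) - (p*α/σ^4)*(x^4 - (l:ℝ)^2*x^2)) intervalIntegrable_const
        (((continuous_const.mul ((continuous_pow 2).sub continuous_const)).sub
          (continuous_const.mul ((continuous_pow 4).sub
            (continuous_const.mul (continuous_pow 2))))).intervalIntegrable _ _),
        intervalIntegral.integral_const, stmt17_Gint]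
      simp
    rw [h2] at h1
    linarith
  -- monotone decrease bound on each interval [l, l+1] ⊆ [0, σ]
  have hdec : ∀ l : ℕ, (l:ℝ) + 1 ≤ σ → (∫ x in (l:ℝ)..((l:ℝ)+1), F x) ≤ F l := by
    intro l hl
    have hl0 : (0:ℝ) ≤ (l:ℝ) := Nat.cast_nonneg l
    have h1 : (∫ x in (l:ℝ)..((l:ℝ)+1), F x) ≤ ∫ _x in (l:ℝ)..((l:ℝ)+1), F l := by
      apply intervalIntegral.integral_mono_on (by linarith) (hFI _ _) intervalIntegrable_const
      intro x hx
      rw [hF_def]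
      have hx0' : (0:ℝ) ≤ x := le_trans hl0 hx.1
      apply Real.rpow_le_rpow
      · have : (x/σ)^2 ≤ 1 := by
          rw [div_pow, div_le_one (by positivity)]
          exact pow_le_pow_left₀ hx0' (by linarith [hx.2]) 2
        linarith
      · have : ((l:ℝ)/σ)^2 ≤ (x/σ)^2 :=
          pow_le_pow_left₀ (div_nonneg hl0 hσpos.le) ((div_le_div_iff_of_pos_right hσpos).mpr hx.1) 2
        linarith
      · exact hp0.le
    simpa using h1
  -- tail bound
  have hFnonneg : (0:ℝ) ≤ F N := by
    show (0:ℝ) ≤ (1 - ((N:ℝ)/σ)^2) ^ p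
    apply Real.rpow_nonneg
    have : ((N:ℝ)/σ)^2 ≤ 1 := by
      rw [div_pow, div_le_one (by positivity)]
      exact pow_le_pow_left₀ (Nat.cast_nonneg N) hNσ 2
    linarith
  have htail : (∫ x in (N:ℝ)..σ, F x) ≤ F N := by
    have h1 : (∫ x in (N:ℝ)..σ, F x) ≤ ∫ _x in (N:ℝ)..σ, F N := by
      apply intervalIntegral.integral_mono_on hNσ (hFI _ _) intervalIntegrable_const
      intro x hx
      rw [hF_def]
      have hN0' : (0:ℝ) ≤ (N:ℝ) := Nat.cast_nonneg N
      have hx0' : (0:ℝ) ≤ x := le_trans hN0' hx.1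
      apply Real.rpow_le_rpow
      · have : (x/σ)^2 ≤ 1 := by
          rw [div_pow, div_le_one (by positivity)]
          exact pow_le_pow_left₀ hx0' hx.2 2
        linarith
      · have hN0 : (0:ℝ) ≤ (N:ℝ) := Nat.cast_nonneg N
        have : ((N:ℝ)/σ)^2 ≤ (x/σ)^2 :=
          pow_le_pow_left₀ (div_nonneg hN0 hσpos.le) ((div_le_div_iff_of_pos_right hσpos).mpr hx.1) 2
        linarith
      · exact hp0.le
    rw [intervalIntegral.integral_const, smul_eq_mul] at h1
    have h2 : (σ - (N:ℝ)) * F N ≤ 1 * F N :=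
      mul_le_mul_of_nonneg_right (by linarith) hFnonneg
    linarith
  -- integral decomposition
  have hsplit : (∫ x in (0:ℝ)..σ, F x)
      = (∑ l ∈ Finset.range N, ∫ x in (l:ℝ)..((l:ℝ)+1), F x) + ∫ x in (N:ℝ)..σ, F x := by
    have hadj : (∑ k ∈ Finset.range N, ∫ x in ((k:ℕ):ℝ)..((k+1:ℕ):ℝ), F x)
        = ∫ x in ((0:ℕ):ℝ)..((N:ℕ):ℝ), F x :=
      intervalIntegral.sum_integral_adjacent_intervals (fun k _ => hFI _ _)
    push_cast at hadj
    rw [← intervalIntegral.integral_add_adjacent_intervals (hFI 0 (N:ℝ)) (hFI (N:ℝ) σ), ← hadj]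
  -- assemble the sum bound
  have hmain : (∑ l ∈ Finset.range m,
      ((p/σ^2)*((l:ℝ) + 1/3) - (p*α/σ^4)*((l:ℝ)^3 + 5/3*(l:ℝ)^2 + (l:ℝ) + 1/5)))
      ≤ (∑ l ∈ Finset.range (N+1), F l) - ∫ x in (0:ℝ)..σ, F x := by
    rw [hsplit, Finset.sum_range_succ]
    have hstep1 : (∑ l ∈ Finset.range m,
        ((p/σ^2)*((l:ℝ) + 1/3) - (p*α/σ^4)*((l:ℝ)^3 + 5/3*(l:ℝ)^2 + (l:ℝ) + 1/5)))
        ≤ ∑ l ∈ Finset.range m, (F l - ∫ x in (l:ℝ)..((l:ℝ)+1), F x) := by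
      apply Finset.sum_le_sum
      intro l hl
      apply key2
      have : l + 1 ≤ m := Finset.mem_range.mp hl
      calc (l:ℝ) + 1 = ((l + 1 : ℕ) : ℝ) := by push_cast; ring
        _ ≤ M := by rw [hM_def]; exact_mod_cast this
    have hstep2 : (∑ l ∈ Finset.range m, (F l - ∫ x in (l:ℝ)..((l:ℝ)+1), F x))
        ≤ ∑ l ∈ Finset.range N, (F l - ∫ x in (l:ℝ)..((l:ℝ)+1), F x) := by
      apply Finset.sum_le_sum_of_subset_of_nonneg
        (Finset.range_subset_range.mpr hmN)
      intro l hl _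
      have hlN : l + 1 ≤ N := Finset.mem_range.mp hl
      have : (l:ℝ) + 1 ≤ σ := by
        calc (l:ℝ) + 1 = ((l + 1 : ℕ) : ℝ) := by push_cast; ring
          _ ≤ (N:ℝ) := by exact_mod_cast hlN
          _ ≤ σ := hNσ
      linarith [hdec l this]
    have hsumsub : (∑ l ∈ Finset.range N, (F l - ∫ x in (l:ℝ)..((l:ℝ)+1), F x))
        = (∑ l ∈ Finset.range N, F l) - ∑ l ∈ Finset.range N, ∫ x in (l:ℝ)..((l:ℝ)+1), F x :=
      Finset.sum_sub_distrib _ _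
    rw [hsumsub] at hstep2
    linarith
  -- closed form of the lower-bound sum
  have hsum : (∑ l ∈ Finset.range m,
      ((p/σ^2)*((l:ℝ) + 1/3) - (p*α/σ^4)*((l:ℝ)^3 + 5/3*(l:ℝ)^2 + (l:ℝ) + 1/5)))
      = ((p/σ^2)*(1/3) - (p*α/σ^4)*(1/5))*M
        + ((p/σ^2) - (p*α/σ^4))*(M*(M-1)/2)
        + (-(p*α/σ^4)*(5/3))*(M*(M-1)*(2*M-1)/6)
        + (-(p*α/σ^4))*(M*(M-1)/2)^2 := by
    rw [show (∑ l ∈ Finset.range m,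
        ((p/σ^2)*((l:ℝ) + 1/3) - (p*α/σ^4)*((l:ℝ)^3 + 5/3*(l:ℝ)^2 + (l:ℝ) + 1/5)))
        = ∑ l ∈ Finset.range m,
          (((p/σ^2)*(1/3) - (p*α/σ^4)*(1/5)) + ((p/σ^2) - (p*α/σ^4))*(l:ℝ)
            + (-(p*α/σ^4)*(5/3))*(l:ℝ)^2 + (-(p*α/σ^4))*(l:ℝ)^3)
      from Finset.sum_congr rfl (fun l _ => by ring)]
    rw [stmt17_sum_poly]
  -- final arithmetic inequality
  have hσ2M : ((d:ℝ) - 2) * M^2 ≤ σ^2 := by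
    have hM2 : M^2 ≤ σ'^2 := pow_le_pow_left₀ (by linarith) hmσ' 2
    have h3 : M^2 * ((d:ℝ)-2) ≤ σ'^2 * ((d:ℝ)-2) :=
      mul_le_mul_of_nonneg_right hM2 (by linarith)
    rw [hσsq]
    linarith
  have hQ : 0 ≤ σ^2*((5/3)*M - 1) + A₁*(M-1)^4
      - 2*α*((M*(M-1)/2)^2 + 5/3*(M*(M-1)*(2*M-1)/6) + M*(M-1)/2 + M/5) := by
    have h53 : (0:ℝ) ≤ (5/3)*M - 1 := by linarith
    have hσ2M' := mul_le_mul_of_nonneg_right hσ2M h53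
    by_cases h5 : 5 ≤ d
    · have hd5 : (5:ℝ) ≤ (d:ℝ) := by exact_mod_cast h5
      have hα_eq : α = ((d:ℝ) - 3)/2 := by rw [hα_def, if_pos h5]
      have hA_eq : A₁ = ((d:ℝ) - 3)/4 := by rw [hA₁, if_pos h5]
      have hA12 : (1:ℝ)/2 ≤ A₁ := by rw [hA_eq]; linarith
      have hαA : α = 2*A₁ := by rw [hα_eq, hA_eq]; ring
      have hdA : (d:ℝ) - 2 = 4*A₁ + 1 := by rw [hA_eq]; ring
      rw [hαA]
      rw [hdA] at hσ2M'
      have hk : (0:ℝ) ≤ M - 1 := by linarith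
      have hk2 : (0:ℝ) ≤ (M-1)^2 := sq_nonneg _
      have hk3 : (0:ℝ) ≤ (M-1)^3 := by positivity
      have hconst : (0:ℝ) ≤ M^2*((5/3)*M - 1) := mul_nonneg (sq_nonneg M) h53
      have hApart : (0:ℝ) ≤ (22/9)*M^3 + (7/3)*M^2 - (176/45)*M + 1 := by
        have hexp0 : (22/9)*M^3 + (7/3)*M^2 - (176/45)*M + 1
            = 84/45 + (364/45)*(M-1) + (29/3)*(M-1)^2 + (22/9)*(M-1)^3 := by ring
        rw [hexp0]
        linarith
      have hApart' : (0:ℝ) ≤ A₁ * ((22/9)*M^3 + (7/3)*M^2 - (176/45)*M + 1) :=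
        mul_nonneg (by linarith) hApart
      have hexp : (4*A₁+1)*M^2*((5/3)*M - 1) + A₁*(M-1)^4
          - 2*(2*A₁)*((M*(M-1)/2)^2 + 5/3*(M*(M-1)*(2*M-1)/6) + M*(M-1)/2 + M/5)
          = M^2*((5/3)*M - 1)
            + A₁*((22/9)*M^3 + (7/3)*M^2 - (176/45)*M + 1) := by ring
      linarith [hσ2M', hexp, hconst, hApart']
    · have hd_eq : d = 4 := by omega
      have hα_eq : α = 2/3 := by rw [hα_def, if_neg h5]
      have hA_eq : A₁ = 2/3 := by rw [hA₁, if_neg h5]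
      have hd2_eq : (d:ℝ) - 2 = 2 := by rw [hd_eq]; norm_num
      rw [hα_eq, hA_eq]
      rw [hd2_eq] at hσ2M'
      have hk : (0:ℝ) ≤ M - 1 := by linarith
      have hk2 : (0:ℝ) ≤ (M-1)^2 := sq_nonneg _
      have hk3 : (0:ℝ) ≤ (M-1)^3 := by positivity
      have hk4 : (0:ℝ) ≤ (M-1)^4 := by positivity
      have hexp : 2*M^2*((5/3)*M - 1) + (2/3)*(M-1)^4
          - 2*(2/3)*((M*(M-1)/2)^2 + 5/3*(M*(M-1)*(2*M-1)/6) + M*(M-1)/2 + M/5)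
          = 16/15 + (634/135)*(M-1) + (53/9)*(M-1)^2 + (52/27)*(M-1)^3
            + (1/3)*(M-1)^4 := by ring
      linarith [hσ2M', hexp, hk, hk2, hk3, hk4]
  have hfinal : ((d:ℝ) - 1)/4 * ((M - 1)/σ)^2 * (1 - A₁*((M - 1)/σ)^2)
      ≤ ((p/σ^2)*(1/3) - (p*α/σ^4)*(1/5))*M
        + ((p/σ^2) - (p*α/σ^4))*(M*(M-1)/2)
        + (-(p*α/σ^4)*(5/3))*(M*(M-1)*(2*M-1)/6)
        + (-(p*α/σ^4))*(M*(M-1)/2)^2 := by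
    rw [← sub_nonneg]
    have hne : σ ≠ 0 := ne_of_gt hσpos
    have heq : (((p/σ^2)*(1/3) - (p*α/σ^4)*(1/5))*M
        + ((p/σ^2) - (p*α/σ^4))*(M*(M-1)/2)
        + (-(p*α/σ^4)*(5/3))*(M*(M-1)*(2*M-1)/6)
        + (-(p*α/σ^4))*(M*(M-1)/2)^2)
        - ((d:ℝ) - 1)/4 * ((M - 1)/σ)^2 * (1 - A₁*((M - 1)/σ)^2)
        = p/(2*σ^4) * (σ^2*((5/3)*M - 1) + A₁*(M-1)^4
          - 2*α*((M*(M-1)/2)^2 + 5/3*(M*(M-1)*(2*M-1)/6) + M*(M-1)/2 + M/5)) := by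
      rw [hp_def]
      field_simp
      ring
    rw [heq]
    positivity
  -- conclude
  have hgoal : (∫ x in (0:ℝ)..σ, F x)
      + ((d:ℝ) - 1)/4 * ((M - 1)/σ)^2 * (1 - A₁*((M - 1)/σ)^2)
      ≤ ∑ l ∈ Finset.range (N+1), F l := by
    rw [hsum] at hmain
    linarith
  exact hgoal
end

section
/- Let d ≥ 4 be an integer and let A₁ = (d−3)/4 if d ≥ 5 and A₁ = 2/3 if d = 4. Then for every t ∈ [0, 1], 1 − (1 − t²)^{(d−1)/2} ≥ ((d−1)/2)·t²·(1 − A₁·t²). -/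
lemma aux18 (p : ℝ) (hp : 2 ≤ p) (x : ℝ) (hx : x ∈ Set.Icc (0 : ℝ) 1) :
    (1 - x) ^ p ≤ 1 - p * x + p * (p - 1) / 2 * x ^ 2 := by
  obtain ⟨hx0, hx1⟩ := hx
  set f : ℝ → ℝ := fun y => 1 - p * y + p * (p - 1) / 2 * y ^ 2 - (1 - y) ^ p with hf
  have hderiv : ∀ y : ℝ, HasDerivAt f (-p + p * (p - 1) * y + p * (1 - y) ^ (p - 1)) y := by
    intro y
    have hinner : HasDerivAt (fun y : ℝ => 1 - y) (-1) y := by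
      simpa using (hasDerivAt_id y).const_sub 1
    have h1 : HasDerivAt (fun y : ℝ => (1 - y) ^ p)
        (p * (1 - y) ^ (p - 1) * (-1)) y :=
      (Real.hasDerivAt_rpow_const (Or.inr (by linarith))).comp y hinner
    have h2 : HasDerivAt (fun y : ℝ => 1 - p * y + p * (p - 1) / 2 * y ^ 2)
        (-p + p * (p - 1) / 2 * (2 * y)) y := by
      have hlin := ((hasDerivAt_id y).const_mul p).const_sub 1
      have h3 : HasDerivAt (fun y : ℝ => y ^ 2) (2 * y) y := by
        simpa using hasDerivAt_pow 2 y
      refine (hlin.add (h3.const_mul (p * (p - 1) / 2))).congr_deriv ?_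
      ring
    have := h2.sub h1
    refine this.congr_deriv ?_
    ring
  have hdiff : Differentiable ℝ f := fun y => (hderiv y).differentiableAt
  have hmono : MonotoneOn f (Set.Icc (0 : ℝ) 1) := by
    apply monotoneOn_of_deriv_nonneg (convex_Icc 0 1)
    · exact hdiff.continuous.continuousOn
    · exact fun y _ => (hdiff y).differentiableWithinAt
    · intro y hy
      rw [interior_Icc] at hy
      rw [(hderiv y).deriv]
      have hb : 1 + (p - 1) * (-y) ≤ (1 + (-y)) ^ (p - 1) :=
        one_add_mul_self_le_rpow_one_add (by linarith [hy.2]) (by linarith)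
      have hber : 1 - (p - 1) * y ≤ (1 - y) ^ (p - 1) := by
        rw [show (1 : ℝ) - y = 1 + (-y) by ring]
        linarith
      nlinarith [hber]
  have h0 : f 0 = 0 := by simp [hf, Real.one_rpow]
  have := hmono (Set.mem_Icc.mpr ⟨le_refl 0, zero_le_one⟩) (Set.mem_Icc.mpr ⟨hx0, hx1⟩) hx0
  rw [h0] at this
  simp only [hf] at this
  linarith

lemma aux18d4 (x : ℝ) (hx0 : 0 ≤ x) (hx1 : x ≤ 1) :
    (1 - x) ^ ((3 : ℝ) / 2) ≤ 1 - 3 / 2 * x + x ^ 2 := by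
  have hbase : (0 : ℝ) ≤ 1 - x := by linarith
  have ha0 : 0 ≤ (1 - x) ^ ((3 : ℝ) / 2) := Real.rpow_nonneg hbase _
  have hb0 : (0 : ℝ) ≤ 1 - 3 / 2 * x + x ^ 2 := by nlinarith [sq_nonneg (x - 3/4)]
  have hsq : ((1 - x) ^ ((3 : ℝ) / 2)) ^ (2 : ℕ) = (1 - x) ^ (3 : ℕ) := by
    rw [← Real.rpow_natCast ((1 - x) ^ ((3:ℝ)/2)) 2, ← Real.rpow_mul hbase]
    rw [show (3 : ℝ) / 2 * ((2 : ℕ) : ℝ) = ((3 : ℕ) : ℝ) by norm_num]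
    rw [Real.rpow_natCast]
  have hsqle : ((1 - x) ^ ((3 : ℝ) / 2)) ^ (2 : ℕ) ≤ (1 - 3 / 2 * x + x ^ 2) ^ (2 : ℕ) := by
    rw [hsq]
    nlinarith [sq_nonneg x, sq_nonneg (x - 1), sq_nonneg (x * (x - 1))]
  nlinarith [hsqle, ha0, hb0]

/-- For integer `d ≥ 4` with `A₁ = (d−3)/4` if `d ≥ 5` and `A₁ = 2/3` if `d = 4`,
for every `t ∈ [0,1]`: `1 − (1 − t²)^{(d−1)/2} ≥ ((d−1)/2)t²(1 − A₁t²)`. -/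
theorem stmt18 (d : ℕ) (hd : 4 ≤ d) (A₁ : ℝ)
    (hA₁ : A₁ = if 5 ≤ d then ((d : ℝ) - 3) / 4 else 2 / 3)
    (t : ℝ) (ht : t ∈ Set.Icc (0 : ℝ) 1) :
    1 - (1 - t ^ 2) ^ (((d : ℝ) - 1) / 2) ≥
      ((d : ℝ) - 1) / 2 * t ^ 2 * (1 - A₁ * t ^ 2) := by
  obtain ⟨ht0, ht1⟩ := ht
  have hx0 : 0 ≤ t ^ 2 := sq_nonneg t
  have hx1 : t ^ 2 ≤ 1 := by nlinarith
  by_cases h5 : 5 ≤ d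
  · rw [hA₁, if_pos h5]
    have hd5 : (5 : ℝ) ≤ (d : ℝ) := by exact_mod_cast h5
    have hp : 2 ≤ ((d : ℝ) - 1) / 2 := by linarith
    have := aux18 (((d : ℝ) - 1) / 2) hp (t ^ 2) ⟨hx0, hx1⟩
    nlinarith [this]
  · have hd4 : d = 4 := by omega
    subst hd4
    rw [hA₁, if_neg h5]
    have hexp : (((4 : ℕ) : ℝ) - 1) / 2 = (3 : ℝ) / 2 := by norm_num
    rw [hexp]
    have := aux18d4 (t ^ 2) hx0 hx1
    push_cast
    nlinarith [this]
end
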